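/- For 0 ≤ δ₁ ≤ δ₂ < 1 and ε₁, ε₂ ∈ [0,1], the delayed-CSIT outer-bound region {(R₁,R₂) ≥ 0 : Rᵢ ≤ 1-δᵢ, εᵢ̄(1-δᵢ̄)/(1-δ₁δ₂)·Rᵢ + Rᵢ̄ ≤ 1-δᵢ̄, i=1,2} contains the no-CSIT region {(R₁,R₂) ≥ 0 : ε₂((1-δ₂)/(1-δ₁))R₁ + R₂ ≤ 1-δ₂, R₁ + ε₁R₂ ≤ 1-δ₁}, i.e., delayed feedback can only enlarge the (outer-bound) region. -/
import Mathlib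

theorem noCSIT_subset_delayed (δ₁ δ₂ ε₁ ε₂ : ℝ)
    (hδ₁ : 0 ≤ δ₁) (hδ : δ₁ ≤ δ₂) (hδ₂ : δ₂ < 1)
    (hε₁ : ε₁ ∈ Set.Icc (0:ℝ) 1) (hε₂ : ε₂ ∈ Set.Icc (0:ℝ) 1) :
    {p : ℝ × ℝ | 0 ≤ p.1 ∧ 0 ≤ p.2 ∧
      ε₂ * ((1 - δ₂) / (1 - δ₁)) * p.1 + p.2 ≤ 1 - δ₂ ∧
      p.1 + ε₁ * p.2 ≤ 1 - δ₁} ⊆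
    {p : ℝ × ℝ | 0 ≤ p.1 ∧ 0 ≤ p.2 ∧
      p.1 ≤ 1 - δ₁ ∧ p.2 ≤ 1 - δ₂ ∧
      (ε₂ * (1 - δ₂) / (1 - δ₁ * δ₂)) * p.1 + p.2 ≤ 1 - δ₂ ∧
      (ε₁ * (1 - δ₁) / (1 - δ₁ * δ₂)) * p.2 + p.1 ≤ 1 - δ₁} := by
  obtain ⟨he₁, he₁'⟩ := hε₁
  obtain ⟨he₂, he₂'⟩ := hε₂
  rintro ⟨x, y⟩ ⟨hx, hy, h1, h2⟩
  simp only [Set.mem_setOf_eq] at *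
  have hd1 : (0:ℝ) < 1 - δ₁ := by linarith
  have hd2 : (0:ℝ) < 1 - δ₂ := by linarith
  have hdd : (0:ℝ) < 1 - δ₁ * δ₂ := by nlinarith
  have hdd' : 1 - δ₁ ≤ 1 - δ₁ * δ₂ := by nlinarith
  have ht1 : 0 ≤ ε₂ * ((1 - δ₂) / (1 - δ₁)) * x := by positivity
  have ht2 : 0 ≤ ε₁ * y := by positivity
  refine ⟨hx, hy, by linarith, by linarith, ?_, ?_⟩
  · have : ε₂ * (1 - δ₂) / (1 - δ₁ * δ₂) * x ≤ ε₂ * ((1 - δ₂) / (1 - δ₁)) * x := by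
      apply mul_le_mul_of_nonneg_right _ hx
      rw [mul_div_assoc]
      apply mul_le_mul_of_nonneg_left _ he₂
      rw [div_le_div_iff₀ hdd hd1]
      nlinarith
    linarith
  · have : ε₁ * (1 - δ₁) / (1 - δ₁ * δ₂) * y ≤ ε₁ * y := by
      apply mul_le_mul_of_nonneg_right _ hy
      rw [div_le_iff₀ hdd]
      nlinarith
    linarith
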